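/- A topological CF-approximation space (U, R, 𝓕) is an sL-approximation space if and only if the poset ({R̄(F) : F ∈ 𝓕}, ⊆) is an sL-cusl. -/
import Mathlib


open Set

/-- The upper approximation operator: `upp R A = {x | ∃ y ∈ A, x R y}`. -/
def upp {U : Type*} (R : U → U → Prop) (A : Set U) : Set U := {x | ∃ y ∈ A, R x y}

/-- `(U, R, 𝓕)` is a CF-approximation space. -/
def IsCFApprox {U : Type*} (R : U → U → Prop) (𝓕 : Set (Set U)) : Prop :=
  Transitive R ∧ 𝓕.Nonempty ∧ (∀ F ∈ 𝓕, F.Finite) ∧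
    ∀ F ∈ 𝓕, ∀ K : Set U, K.Finite → K ⊆ upp R F →
      ∃ G ∈ 𝓕, K ⊆ upp R G ∧ G ⊆ upp R F

/-- `E` is a CF-closed set of `(U, R, 𝓕)`. -/
def CFClosed {U : Type*} (R : U → U → Prop) (𝓕 : Set (Set U)) (E : Set U) : Prop :=
  ∀ K : Set U, K.Finite → K ⊆ E →
    ∃ F ∈ 𝓕, K ⊆ upp R F ∧ upp R F ⊆ E ∧ F ⊆ E

/-- The join saturation `𝓕^♯`: all unions of nonempty finite subfamilies of `𝓕`. -/
def joinSat {U : Type*} (𝓕 : Set (Set U)) : Set (Set U) :=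
  {A | ∃ 𝓐 : Set (Set U), 𝓐 ⊆ 𝓕 ∧ 𝓐.Finite ∧ 𝓐.Nonempty ∧ A = ⋃₀ 𝓐}

/-- `S(M, F)`: the set of `G ∈ 𝓕` satisfying (sL-1) and (sL-2). -/
def SFam {U : Type*} (R : U → U → Prop) (𝓕 : Set (Set U)) (M F : Set U) : Set (Set U) :=
  {G | G ∈ 𝓕 ∧ upp R M ⊆ upp R G ∧ upp R G ⊆ upp R F ∧
    ∀ G' ∈ 𝓕, upp R M ⊆ upp R G' → upp R G' ⊆ upp R F → upp R G ⊆ upp R G'}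

/-- `S*(M, F) = {G ∈ S(M, F) | G ⊆ upp R F}`. -/
def SStar {U : Type*} (R : U → U → Prop) (𝓕 : Set (Set U)) (M F : Set U) : Set (Set U) :=
  {G | G ∈ SFam R 𝓕 M F ∧ G ⊆ upp R F}

/-- sL-approximation space. -/
def IsSLApprox {U : Type*} (R : U → U → Prop) (𝓕 : Set (Set U)) : Prop :=
  IsCFApprox R 𝓕 ∧
    ∀ M ∈ joinSat 𝓕, ∀ F ∈ 𝓕, M ⊆ upp R F → (SFam R 𝓕 M F).Nonempty

/-- L-approximation space. -/
def IsLApprox {U : Type*} (R : U → U → Prop) (𝓕 : Set (Set U)) : Prop :=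
  IsCFApprox R 𝓕 ∧
    ∀ M ∈ joinSat 𝓕 ∪ {(∅ : Set U)}, ∀ F ∈ 𝓕, M ⊆ upp R F → (SFam R 𝓕 M F).Nonempty

/-- bc-approximation space. -/
def IsBCApprox {U : Type*} (R : U → U → Prop) (𝓕 : Set (Set U)) : Prop :=
  IsCFApprox R 𝓕 ∧
    ∀ M ∈ joinSat 𝓕 ∪ {(∅ : Set U)}, ∀ F ∈ 𝓕, M ⊆ upp R F →
      ∃ G ∈ 𝓕, upp R M ⊆ upp R G ∧ upp R G ⊆ upp R F ∧
        ∀ G' ∈ 𝓕, upp R M ⊆ upp R G' → upp R G ⊆ upp R G'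

/-- A dcpo: every (nonempty) directed subset has a supremum. -/
def IsDcpo (P : Type*) [PartialOrder P] : Prop :=
  ∀ D : Set P, D.Nonempty → DirectedOn (· ≤ ·) D → ∃ s, IsLUB D s

/-- The way-below relation `x ≪ y`. -/
def WayBelow {P : Type*} [PartialOrder P] (x y : P) : Prop :=
  ∀ D : Set P, D.Nonempty → DirectedOn (· ≤ ·) D →
    ∀ s, IsLUB D s → y ≤ s → ∃ d ∈ D, x ≤ d

/-- Continuous domain: a dcpo in which for every `x` the set `{z | z ≪ x}` is
directed with supremum `x`. -/
def IsContinuousDomain (P : Type*) [PartialOrder P] : Prop :=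
  IsDcpo P ∧ ∀ x : P, {z | WayBelow z x}.Nonempty ∧
    DirectedOn (· ≤ ·) {z | WayBelow z x} ∧ IsLUB {z | WayBelow z x} x

/-- Algebraic domain: a dcpo in which for every `x` the set `↓x ∩ K(P)` is
directed with supremum `x`. -/
def IsAlgebraicDomain (P : Type*) [PartialOrder P] : Prop :=
  IsDcpo P ∧ ∀ x : P, ({k | k ≤ x ∧ WayBelow k k}).Nonempty ∧
    DirectedOn (· ≤ ·) {k | k ≤ x ∧ WayBelow k k} ∧
    IsLUB {k | k ≤ x ∧ WayBelow k k} x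

/-- sL-domain: a continuous domain in which every principal ideal is a
sup-semilattice. -/
def IsSLDomain (P : Type*) [PartialOrder P] : Prop :=
  IsContinuousDomain P ∧ ∀ x a b : P, a ≤ x → b ≤ x →
    ∃ s, s ≤ x ∧ a ≤ s ∧ b ≤ s ∧ ∀ t, t ≤ x → a ≤ t → b ≤ t → s ≤ t

/-- L-domain: a continuous domain in which every principal ideal is a
complete lattice (every subset of `↓x` has a least upper bound in `↓x`). -/
def IsLDomain (P : Type*) [PartialOrder P] : Prop :=
  IsContinuousDomain P ∧ ∀ (x : P) (A : Set P), (∀ a ∈ A, a ≤ x) →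
    ∃ s, s ≤ x ∧ (∀ a ∈ A, a ≤ s) ∧ ∀ t, t ≤ x → (∀ a ∈ A, a ≤ t) → s ≤ t

/-- bc-domain: a continuous domain in which every up-bounded subset has a
supremum. -/
def IsBCDomain (P : Type*) [PartialOrder P] : Prop :=
  IsContinuousDomain P ∧ ∀ A : Set P, (∃ b, ∀ a ∈ A, a ≤ b) → ∃ s, IsLUB A s

private lemma upp_mono {U : Type*} (R : U → U → Prop) {A B : Set U} (h : A ⊆ B) :
    upp R A ⊆ upp R B := fun x ⟨y, hy, hxy⟩ => ⟨y, h hy, hxy⟩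

private lemma stmt19_aux {U : Type*} (R : U → U → Prop) (𝓕 : Set (Set U)) (p : Set U)
    (hsup : ∀ a ∈ upp R '' 𝓕, ∀ b ∈ upp R '' 𝓕, a ⊆ p → b ⊆ p →
      ∃ s ∈ upp R '' 𝓕, s ⊆ p ∧ a ⊆ s ∧ b ⊆ s ∧
        ∀ t ∈ upp R '' 𝓕, t ⊆ p → a ⊆ t → b ⊆ t → s ⊆ t) :
    ∀ T : Finset (Set U), T.Nonempty → (∀ A ∈ T, (A : Set U) ∈ 𝓕) →
      (∀ A ∈ T, upp R A ⊆ p) →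
      ∃ s ∈ upp R '' 𝓕, s ⊆ p ∧ (∀ A ∈ T, upp R A ⊆ s) ∧
        ∀ t ∈ upp R '' 𝓕, t ⊆ p → (∀ A ∈ T, upp R A ⊆ t) → s ⊆ t := by
  classical
  intro T
  induction T using Finset.induction_on with
  | empty => intro h; exact absurd h (by simp)
  | @insert A T' hx ih =>
    intro _ hmem hsub
    by_cases hT' : T'.Nonempty
    · obtain ⟨s', hs'mem, hs'p, hs'all, hs'min⟩ :=
        ih hT' (fun B hB => hmem B (Finset.mem_insert_of_mem hB))
          (fun B hB => hsub B (Finset.mem_insert_of_mem hB))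
      obtain ⟨s, hsmem, hsp, has, hs's, hsmin⟩ :=
        hsup (upp R A) ⟨A, hmem A (Finset.mem_insert_self _ _), rfl⟩ s' hs'mem
          (hsub A (Finset.mem_insert_self _ _)) hs'p
      refine ⟨s, hsmem, hsp, ?_, ?_⟩
      · intro B hB
        rcases Finset.mem_insert.mp hB with rfl | hB
        · exact has
        · exact (hs'all B hB).trans hs's
      · intro t ht htp hall
        exact hsmin t ht htp (hall A (Finset.mem_insert_self _ _))
          (hs'min t ht htp fun B hB => hall B (Finset.mem_insert_of_mem hB))
    · have hTe : T' = ∅ := Finset.not_nonempty_iff_eq_empty.mp hT'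
      subst hTe
      refine ⟨upp R A, ⟨A, hmem A (by simp), rfl⟩, hsub A (by simp), ?_, ?_⟩
      · intro B hB; simp only [Finset.mem_insert, Finset.notMem_empty, or_false] at hB
        subst hB; exact subset_rfl
      · intro t ht htp hall; exact hall A (by simp)

/-- a topological CF-approximation space is an sL-approximation
space iff `({upp R F | F ∈ 𝓕}, ⊆)` is an sL-cusl. -/
theorem stmt19 {U : Type*} (R : U → U → Prop) (𝓕 : Set (Set U))
    (hCF : IsCFApprox R 𝓕) (hrefl : Reflexive R) :
    IsSLApprox R 𝓕 ↔
    ∀ p ∈ upp R '' 𝓕, ∀ a ∈ upp R '' 𝓕, ∀ b ∈ upp R '' 𝓕,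
      a ⊆ p → b ⊆ p →
      ∃ s ∈ upp R '' 𝓕, s ⊆ p ∧ a ⊆ s ∧ b ⊆ s ∧
        ∀ t ∈ upp R '' 𝓕, t ⊆ p → a ⊆ t → b ⊆ t → s ⊆ t := by
  have htrans : Transitive R := hCF.1
  constructor
  · rintro ⟨-, hsl⟩ p ⟨F, hF, rfl⟩ a ⟨A, hA, rfl⟩ b ⟨B, hB, rfl⟩ hap hbp
    have hM : A ∪ B ∈ joinSat 𝓕 := by
      refine ⟨{A, B}, ?_, (Set.finite_singleton B).insert A, ⟨A, by simp⟩, by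
        rw [Set.sUnion_pair]⟩
      rintro X (rfl | rfl) <;> assumption
    have hMF : A ∪ B ⊆ upp R F := by
      rintro x (hx | hx)
      · exact hap ⟨x, hx, hrefl x⟩
      · exact hbp ⟨x, hx, hrefl x⟩
    obtain ⟨G, hG, h1, h2, h3⟩ := hsl _ hM F hF hMF
    refine ⟨upp R G, ⟨G, hG, rfl⟩, h2,
      (upp_mono R Set.subset_union_left).trans h1,
      (upp_mono R Set.subset_union_right).trans h1, ?_⟩
    rintro t ⟨G', hG', rfl⟩ htp hat hbt
    refine h3 G' hG' ?_ htp
    rintro x ⟨y, hy | hy, hxy⟩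
    · exact hat ⟨y, hy, hxy⟩
    · exact hbt ⟨y, hy, hxy⟩
  · intro hsup
    refine ⟨hCF, ?_⟩
    rintro M ⟨𝓐, h𝓐F, hfin, hne, rfl⟩ F hF hMF
    classical
    have hsubp : ∀ A ∈ 𝓐, upp R A ⊆ upp R F := by
      rintro A hA x ⟨y, hy, hxy⟩
      obtain ⟨z, hz, hyz⟩ := hMF (Set.subset_sUnion_of_mem hA hy)
      exact ⟨z, hz, htrans hxy hyz⟩
    obtain ⟨s, ⟨G, hG, rfl⟩, hsp, hall, hmin⟩ :=
      stmt19_aux R 𝓕 (upp R F) (hsup (upp R F) ⟨F, hF, rfl⟩) hfin.toFinset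
        (by simpa using hne) (fun A hA => h𝓐F (hfin.mem_toFinset.mp hA))
        (fun A hA => hsubp A (hfin.mem_toFinset.mp hA))
    refine ⟨G, hG, ?_, hsp, ?_⟩
    · rintro x ⟨y, ⟨A, hA, hy⟩, hxy⟩
      exact hall A (hfin.mem_toFinset.mpr hA) ⟨y, hy, hxy⟩
    · intro G' hG' hMG' hG'F
      refine hmin (upp R G') ⟨G', hG', rfl⟩ hG'F ?_
      intro A hA
      exact (upp_mono R (Set.subset_sUnion_of_mem (hfin.mem_toFinset.mp hA))).trans hMG'
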